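/- Let n ≥ 1, σ ∈ S_{2n} and w ∈ O_σ. Then w is the element of minimal length in O_σ if and only if m_{11}^w = m_{13}^w = m_{21}^w = m_{22}^w = m_{33}^w = 0. -/

import Mathlib

/-- The subgroup `S ⊆ S_{2n}` of permutations fixing each of the last `n` points
(`n+1, …, 2n` in one-based terms, i.e. the indices `i` with `n ≤ i` in zero-based terms). -/
def Sfix (n : ℕ) : Set (Equiv.Perm (Fin (2 * n))) :=
  {g | ∀ i : Fin (2 * n), n ≤ (i : ℕ) → g i = i}

/-- The double coset `O_σ = {g σ h : g, h ∈ S}`. -/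
def dcoset (n : ℕ) (σ : Equiv.Perm (Fin (2 * n))) : Set (Equiv.Perm (Fin (2 * n))) :=
  {t | ∃ g ∈ Sfix n, ∃ h ∈ Sfix n, t = g * σ * h}

/-- The length of a permutation: its number of inversions. -/
noncomputable def len (n : ℕ) (σ : Equiv.Perm (Fin (2 * n))) : ℕ :=
  {p : Fin (2 * n) × Fin (2 * n) | p.1 < p.2 ∧ σ p.2 < σ p.1}.ncard

/-- Membership in the set `N_l^t` (`l ∈ {1,2,3,4}`): `N_1` consists of first-half points sent
to the first half, `N_2` first-half points sent to the second half, `N_3` second-half points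
sent to the first half, and `N_4` second-half points sent to the second half. -/
def inN (n : ℕ) (t : Equiv.Perm (Fin (2 * n))) : ℕ → Fin (2 * n) → Prop
  | 1, i => (i : ℕ) < n ∧ (t i : ℕ) < n
  | 2, i => (i : ℕ) < n ∧ n ≤ (t i : ℕ)
  | 3, i => n ≤ (i : ℕ) ∧ (t i : ℕ) < n
  | 4, i => n ≤ (i : ℕ) ∧ n ≤ (t i : ℕ)
  | _, _ => False

/-- The count `m_{lr}^t = #{(i,j) : i ∈ N_l^t, j ∈ N_r^t, i < j, t(j) < t(i)}`. -/
noncomputable def mcount (n : ℕ) (t : Equiv.Perm (Fin (2 * n))) (l r : ℕ) : ℕ :=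
  {p : Fin (2 * n) × Fin (2 * n) |
    inN n t l p.1 ∧ inN n t r p.2 ∧ p.1 < p.2 ∧ t p.2 < t p.1}.ncard

/-- the pointwise characterization of the double coset membership (necessary cond.) -/
def Pp (n : ℕ) (σ t : Equiv.Perm (Fin (2 * n))) : Prop :=
  ∀ j : Fin (2 * n), n ≤ (j : ℕ) →
    (n ≤ (σ j : ℕ) → t j = σ j) ∧ ((σ j : ℕ) < n → (t j : ℕ) < n)

lemma Sfix_small {n : ℕ} {g : Equiv.Perm (Fin (2 * n))} (hg : g ∈ Sfix n)
    {x : Fin (2 * n)} (hx : (x : ℕ) < n) : ((g x : Fin (2*n)) : ℕ) < n := by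
  by_contra hc
  push_neg at hc
  have := hg (g x) hc
  have : g x = x := g.injective this
  rw [this] at hc
  omega

lemma P_of_mem {n : ℕ} {σ t : Equiv.Perm (Fin (2 * n))} (ht : t ∈ dcoset n σ) :
    Pp n σ t := by
  obtain ⟨g, hg, h, hh, rfl⟩ := ht
  intro j hj
  have hhj : h j = j := hh j hj
  constructor
  · intro hs
    simp only [Equiv.Perm.mul_apply, hhj]
    exact hg (σ j) hs
  · intro hs
    simp only [Equiv.Perm.mul_apply, hhj]
    exact Sfix_small hg hs


def Uset (n : ℕ) (t : Equiv.Perm (Fin (2 * n))) : Set (Fin (2 * n) × Fin (2 * n)) :=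
  {p | p.1 < p.2 ∧ t p.2 < t p.1 ∧ n ≤ (p.2 : ℕ) ∧ n ≤ (t p.1 : ℕ)}

abbrev mset (n : ℕ) (t : Equiv.Perm (Fin (2 * n))) (l r : ℕ) :
    Set (Fin (2 * n) × Fin (2 * n)) :=
  {p : Fin (2 * n) × Fin (2 * n) |
    inN n t l p.1 ∧ inN n t r p.2 ∧ p.1 < p.2 ∧ t p.2 < t p.1}

lemma len_decomp (n : ℕ) (t : Equiv.Perm (Fin (2 * n))) :
    len n t = mcount n t 1 1 + mcount n t 1 3 + mcount n t 2 1 + mcount n t 2 2 +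
      mcount n t 3 3 + (Uset n t).ncard := by
  have hsplit : {p : Fin (2 * n) × Fin (2 * n) | p.1 < p.2 ∧ t p.2 < t p.1} =
      mset n t 1 1 ∪ (mset n t 1 3 ∪ (mset n t 2 1 ∪ (mset n t 2 2 ∪
        (mset n t 3 3 ∪ Uset n t)))) := by
    ext ⟨i, j⟩
    simp only [mset, Uset, inN, Set.mem_setOf_eq, Set.mem_union, Fin.lt_def]
    omega
  have fin : ∀ s : Set (Fin (2 * n) × Fin (2 * n)), s.Finite := fun s => s.toFinite
  rw [len, hsplit]
  rw [Set.ncard_union_eq ?d1 (fin _) (fin _), Set.ncard_union_eq ?d2 (fin _) (fin _),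
    Set.ncard_union_eq ?d3 (fin _) (fin _), Set.ncard_union_eq ?d4 (fin _) (fin _),
    Set.ncard_union_eq ?d5 (fin _) (fin _)]
  · simp only [mcount, mset]; ring
  case d5 =>
    rw [Set.disjoint_left]; rintro ⟨i, j⟩ h1 h2
    simp only [mset, Uset, inN, Set.mem_setOf_eq, Fin.lt_def] at h1 h2; omega
  case d4 =>
    rw [Set.disjoint_left]; rintro ⟨i, j⟩ h1 h2
    simp only [mset, Uset, inN, Set.mem_setOf_eq, Set.mem_union, Fin.lt_def] at h1 h2; omega
  case d3 =>
    rw [Set.disjoint_left]; rintro ⟨i, j⟩ h1 h2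
    simp only [mset, Uset, inN, Set.mem_setOf_eq, Set.mem_union, Fin.lt_def] at h1 h2; omega
  case d2 =>
    rw [Set.disjoint_left]; rintro ⟨i, j⟩ h1 h2
    simp only [mset, Uset, inN, Set.mem_setOf_eq, Set.mem_union, Fin.lt_def] at h1 h2; omega
  case d1 =>
    rw [Set.disjoint_left]; rintro ⟨i, j⟩ h1 h2
    simp only [mset, Uset, inN, Set.mem_setOf_eq, Set.mem_union, Fin.lt_def] at h1 h2; omega

lemma keyA {n : ℕ} {σ t t' : Equiv.Perm (Fin (2 * n))} (ht : Pp n σ t) (ht' : Pp n σ t')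
    {i : Fin (2 * n)} (hi : (i : ℕ) < n) (hti : n ≤ (t i : ℕ)) :
    ((t'⁻¹ (t i) : Fin (2 * n)) : ℕ) < n := by
  by_contra hc
  push_neg at hc
  set j := t'⁻¹ (t i) with hjdef
  have hj : t' j = t i := t'.apply_symm_apply _
  have hσj : n ≤ ((σ j : Fin (2 * n)) : ℕ) := by
    by_contra h2
    push_neg at h2
    have := (ht' j hc).2 h2
    rw [hj] at this
    omega
  have h1 := (ht' j hc).1 hσj
  have h2 := (ht j hc).1 hσj
  have he : t j = t i := by rw [h2, ← h1, hj]
  have : j = i := t.injective he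
  rw [this] at hc
  omega

def phi (n : ℕ) (t t' : Equiv.Perm (Fin (2 * n))) :
    Fin (2 * n) × Fin (2 * n) → Fin (2 * n) × Fin (2 * n) :=
  fun p => (if (p.1 : ℕ) < n then t'⁻¹ (t p.1) else p.1, p.2)

lemma phi_mapsTo {n : ℕ} {σ t t' : Equiv.Perm (Fin (2 * n))} (ht : Pp n σ t)
    (ht' : Pp n σ t') : Set.MapsTo (phi n t t') (Uset n t) (Uset n t') := by
  rintro ⟨i, j⟩ ⟨hij, hinv, hj, hti⟩
  dsimp only at hij hinv hj hti
  simp only [phi, Uset, Set.mem_setOf_eq]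
  by_cases hi : (i : ℕ) < n
  · rw [if_pos hi]
    have hval : t' (t'⁻¹ (t i)) = t i := t'.apply_symm_apply _
    have hlt : ((t'⁻¹ (t i) : Fin (2 * n)) : ℕ) < n := keyA ht ht' hi hti
    refine ⟨Fin.lt_def.mpr (by omega), ?_, hj, ?_⟩
    · rw [hval]
      rcases lt_or_ge ((σ j : Fin (2 * n)) : ℕ) n with hc | hc
      · have := (ht' j hj).2 hc
        exact Fin.lt_def.mpr (by omega)
      · rw [(ht' j hj).1 hc, ← (ht j hj).1 hc]
        exact hinv
    · rw [hval]
      exact hti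
  · rw [if_neg hi]
    push_neg at hi
    have hσi : n ≤ ((σ i : Fin (2 * n)) : ℕ) := by
      by_contra h2
      push_neg at h2
      have := (ht i hi).2 h2
      omega
    have e : t' i = t i := by rw [(ht' i hi).1 hσi, (ht i hi).1 hσi]
    refine ⟨hij, ?_, hj, by rw [e]; exact hti⟩
    rw [e]
    rcases lt_or_ge ((σ j : Fin (2 * n)) : ℕ) n with hc | hc
    · have := (ht' j hj).2 hc
      exact Fin.lt_def.mpr (by omega)
    · rw [(ht' j hj).1 hc, ← (ht j hj).1 hc]
      exact hinv

lemma phi_phi {n : ℕ} {σ t t' : Equiv.Perm (Fin (2 * n))} (ht : Pp n σ t)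
    (ht' : Pp n σ t') : ∀ p ∈ Uset n t', phi n t t' (phi n t' t p) = p := by
  rintro ⟨i, j⟩ ⟨hij, hinv, hj, hti⟩
  dsimp only at hij hinv hj hti
  simp only [phi]
  by_cases hi : (i : ℕ) < n
  · rw [if_pos hi]
    have h1 : ((t⁻¹ (t' i) : Fin (2 * n)) : ℕ) < n := keyA ht' ht hi hti
    rw [if_pos h1]
    simp
  · rw [if_neg hi, if_neg hi]

lemma Uset_ncard_congr {n : ℕ} {σ t t' : Equiv.Perm (Fin (2 * n))} (ht : Pp n σ t)
    (ht' : Pp n σ t') : (Uset n t).ncard = (Uset n t').ncard := by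
  have bij : Set.BijOn (phi n t t') (Uset n t) (Uset n t') := by
    refine ⟨phi_mapsTo ht ht', ?_, ?_⟩
    · rintro ⟨i, j⟩ hp ⟨a, b⟩ hq he
      simp only [phi, Prod.mk.injEq] at he
      obtain ⟨he1, he2⟩ := he
      subst he2
      obtain ⟨-, -, -, hti⟩ := hp
      obtain ⟨-, -, -, hta⟩ := hq
      dsimp only at hti hta
      by_cases hi : (i : ℕ) < n <;> by_cases ha : (a : ℕ) < n
      · rw [if_pos hi, if_pos ha] at he1
        have := t'⁻¹.injective he1
        have := t.injective this
        rw [this]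
      · rw [if_pos hi, if_neg ha] at he1
        have := keyA ht ht' hi hti
        rw [he1] at this
        omega
      · rw [if_neg hi, if_pos ha] at he1
        have := keyA ht ht' ha hta
        rw [← he1] at this
        omega
      · rw [if_neg hi, if_neg ha] at he1
        rw [he1]
    · intro p hp
      exact ⟨phi n t' t p, phi_mapsTo ht' ht hp, phi_phi ht ht' p hp⟩
  rw [← bij.image_eq, Set.ncard_image_of_injOn bij.injOn]


noncomputable section Construction

variable (n : ℕ) (σ : Equiv.Perm (Fin (2 * n)))

def smallsF : Finset (Fin (2 * n)) := Finset.univ.filter (fun x => (x : ℕ) < n)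

def A1 : Finset (Fin (2 * n)) :=
  (smallsF n).filter (fun x => ((σ⁻¹ x : Fin (2 * n)) : ℕ) < n)

def B3 : Finset (Fin (2 * n)) :=
  Finset.univ.filter (fun j => n ≤ (j : ℕ) ∧ ((σ j : Fin (2 * n)) : ℕ) < n)

lemma card_smalls : (smallsF n).card = n := by
  have : smallsF n = Finset.map (Fin.castLEEmb (by omega : n ≤ 2 * n)) Finset.univ := by
    ext x
    simp only [smallsF, Finset.mem_filter, Finset.mem_univ, true_and, Finset.mem_map,
      Fin.castLEEmb, Function.Embedding.coeFn_mk]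
    constructor
    · intro hx
      exact ⟨⟨(x : ℕ), hx⟩, rfl⟩
    · rintro ⟨a, rfl⟩
      exact a.isLt
  rw [this, Finset.card_map, Finset.card_univ, Fintype.card_fin]

lemma card_A1_add_B3 : (A1 n σ).card + (B3 n σ).card = n := by
  have h1 : (B3 n σ).card =
      ((smallsF n).filter (fun x => ¬ ((σ⁻¹ x : Fin (2 * n)) : ℕ) < n)).card := by
    refine Finset.card_bij (fun j _ => σ j) ?_ ?_ ?_
    · intro j hj
      simp only [B3, Finset.mem_filter, Finset.mem_univ, true_and] at hj
      simp only [smallsF, Finset.mem_filter, Finset.mem_univ, true_and,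
        Equiv.Perm.inv_def, Equiv.symm_apply_apply, not_lt]
      exact ⟨hj.2, hj.1⟩
    · intro a _ b _ hab
      exact σ.injective hab
    · intro x hx
      simp only [smallsF, Finset.mem_filter, Finset.mem_univ, true_and, not_lt] at hx
      refine ⟨σ⁻¹ x, ?_, σ.apply_symm_apply x⟩
      simp only [B3, Finset.mem_filter, Finset.mem_univ, true_and,
        Equiv.Perm.inv_def, Equiv.apply_symm_apply]
      exact ⟨hx.2, hx.1⟩
  rw [h1, A1, Finset.card_filter_add_card_filter_not, card_smalls]

def isoA1 : Fin (A1 n σ).card ≃o {x // x ∈ A1 n σ} := (A1 n σ).orderIsoOfFin rfl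

def isoB3 : Fin (B3 n σ).card ≃o {x // x ∈ B3 n σ} := (B3 n σ).orderIsoOfFin rfl

lemma memA1 {x : Fin (2 * n)} (hx : (x : ℕ) < n) (h1 : ((σ⁻¹ x : Fin (2 * n)) : ℕ) < n) :
    x ∈ A1 n σ := by
  simp only [A1, smallsF, Finset.mem_filter, Finset.mem_univ, true_and]
  exact ⟨hx, h1⟩

lemma memB3 {x : Fin (2 * n)} (hx : (x : ℕ) < n)
    (h1 : ¬ ((σ⁻¹ x : Fin (2 * n)) : ℕ) < n) : σ⁻¹ x ∈ B3 n σ := by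
  simp only [B3, Finset.mem_filter, Finset.mem_univ, true_and,
    Equiv.Perm.inv_def, Equiv.apply_symm_apply]
  exact ⟨le_of_not_gt h1, hx⟩

def gfun : Fin (2 * n) → Fin (2 * n) := fun x =>
  if hx : (x : ℕ) < n then
    if h1 : ((σ⁻¹ x : Fin (2 * n)) : ℕ) < n then
      ⟨((isoA1 n σ).symm ⟨x, memA1 n σ hx h1⟩ : Fin (A1 n σ).card), by
        have h2 := ((isoA1 n σ).symm ⟨x, memA1 n σ hx h1⟩).isLt
        have h3 := card_A1_add_B3 n σ
        omega⟩
    else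
      ⟨(A1 n σ).card + ((isoB3 n σ).symm ⟨σ⁻¹ x, memB3 n σ hx h1⟩ : Fin (B3 n σ).card), by
        have h2 := ((isoB3 n σ).symm ⟨σ⁻¹ x, memB3 n σ hx h1⟩).isLt
        have h3 := card_A1_add_B3 n σ
        omega⟩
  else x


lemma gfun_eq1 {x : Fin (2 * n)} (hx : (x : ℕ) < n)
    (h1 : ((σ⁻¹ x : Fin (2 * n)) : ℕ) < n) :
    gfun n σ x = ⟨((isoA1 n σ).symm ⟨x, memA1 n σ hx h1⟩ : Fin (A1 n σ).card), by
      have h2 := ((isoA1 n σ).symm ⟨x, memA1 n σ hx h1⟩).isLt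
      have h3 := card_A1_add_B3 n σ
      omega⟩ := by
  simp only [gfun, dif_pos hx, dif_pos h1]

lemma gfun_eq2 {x : Fin (2 * n)} (hx : (x : ℕ) < n)
    (h1 : ¬ ((σ⁻¹ x : Fin (2 * n)) : ℕ) < n) :
    gfun n σ x = ⟨(A1 n σ).card +
        ((isoB3 n σ).symm ⟨σ⁻¹ x, memB3 n σ hx h1⟩ : Fin (B3 n σ).card), by
      have h2 := ((isoB3 n σ).symm ⟨σ⁻¹ x, memB3 n σ hx h1⟩).isLt
      have h3 := card_A1_add_B3 n σ
      omega⟩ := by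
  simp only [gfun, dif_pos hx, dif_neg h1]

lemma gfun_large {x : Fin (2 * n)} (hx : ¬ (x : ℕ) < n) : gfun n σ x = x := by
  simp only [gfun, dif_neg hx]

lemma gfun_inj : Function.Injective (gfun n σ) := by
  have hcard := card_A1_add_B3 n σ
  intro x y h
  by_cases hx : (x : ℕ) < n
  · by_cases hx1 : ((σ⁻¹ x : Fin (2 * n)) : ℕ) < n
    · by_cases hy : (y : ℕ) < n
      · by_cases hy1 : ((σ⁻¹ y : Fin (2 * n)) : ℕ) < n
        · rw [gfun_eq1 n σ hx hx1, gfun_eq1 n σ hy hy1, Fin.mk.injEq] at h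
          have h2 := (isoA1 n σ).symm.injective (Fin.ext h)
          exact Subtype.ext_iff.mp h2
        · rw [gfun_eq1 n σ hx hx1, gfun_eq2 n σ hy hy1, Fin.mk.injEq] at h
          have b1 := ((isoA1 n σ).symm ⟨x, memA1 n σ hx hx1⟩).isLt
          omega
      · rw [gfun_eq1 n σ hx hx1, gfun_large n σ hy] at h
        have b1 := ((isoA1 n σ).symm ⟨x, memA1 n σ hx hx1⟩).isLt
        have := congrArg Fin.val h
        simp only at this
        omega
    · by_cases hy : (y : ℕ) < n
      · by_cases hy1 : ((σ⁻¹ y : Fin (2 * n)) : ℕ) < n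
        · rw [gfun_eq2 n σ hx hx1, gfun_eq1 n σ hy hy1, Fin.mk.injEq] at h
          have b1 := ((isoA1 n σ).symm ⟨y, memA1 n σ hy hy1⟩).isLt
          omega
        · rw [gfun_eq2 n σ hx hx1, gfun_eq2 n σ hy hy1, Fin.mk.injEq] at h
          have h' : (((isoB3 n σ).symm ⟨σ⁻¹ x, memB3 n σ hx hx1⟩ : Fin (B3 n σ).card) : ℕ)
              = (((isoB3 n σ).symm ⟨σ⁻¹ y, memB3 n σ hy hy1⟩ : Fin (B3 n σ).card) : ℕ) := by
            omega
          have h2 := (isoB3 n σ).symm.injective (Fin.ext h')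
          have h3 : (σ⁻¹ x : Fin (2 * n)) = σ⁻¹ y := Subtype.ext_iff.mp h2
          have := congrArg σ h3
          simpa using this
      · rw [gfun_eq2 n σ hx hx1, gfun_large n σ hy] at h
        have b1 := ((isoB3 n σ).symm ⟨σ⁻¹ x, memB3 n σ hx hx1⟩).isLt
        have := congrArg Fin.val h
        simp only at this
        omega
  · by_cases hy : (y : ℕ) < n
    · by_cases hy1 : ((σ⁻¹ y : Fin (2 * n)) : ℕ) < n
      · rw [gfun_large n σ hx, gfun_eq1 n σ hy hy1] at h
        have b1 := ((isoA1 n σ).symm ⟨y, memA1 n σ hy hy1⟩).isLt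
        have := congrArg Fin.val h
        simp only at this
        omega
      · rw [gfun_large n σ hx, gfun_eq2 n σ hy hy1] at h
        have b1 := ((isoB3 n σ).symm ⟨σ⁻¹ y, memB3 n σ hy hy1⟩).isLt
        have := congrArg Fin.val h
        simp only at this
        omega
    · rw [gfun_large n σ hx, gfun_large n σ hy] at h
      exact h

def gperm : Equiv.Perm (Fin (2 * n)) :=
  Equiv.ofBijective (gfun n σ) (Finite.injective_iff_bijective.mp (gfun_inj n σ))

lemma gperm_apply (x : Fin (2 * n)) : gperm n σ x = gfun n σ x := rfl

def Wf : Finset (Fin (2 * n)) :=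
  Finset.image (fun i => gperm n σ (σ i)) (smallsF n)

lemma cardW : (Wf n σ).card = n := by
  have hinj : Function.Injective (fun i => gperm n σ (σ i)) :=
    fun a b hab => σ.injective ((gperm n σ).injective hab)
  rw [Wf, Finset.card_image_of_injective _ hinj, card_smalls]

def isoW : Fin n ≃o {x // x ∈ Wf n σ} := (Wf n σ).orderIsoOfFin (cardW n σ)

lemma memWf_iff {z : Fin (2 * n)} :
    z ∈ Wf n σ ↔ ∃ i : Fin (2 * n), (i : ℕ) < n ∧ gperm n σ (σ i) = z := by
  simp only [Wf, Finset.mem_image, smallsF, Finset.mem_filter, Finset.mem_univ, true_and]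

def hfun : Fin (2 * n) → Fin (2 * n) := fun x =>
  if hx : (x : ℕ) < n then σ⁻¹ ((gperm n σ)⁻¹ ((isoW n σ ⟨(x : ℕ), hx⟩ : Fin (2 * n))))
  else x

lemma hfun_small {x : Fin (2 * n)} (hx : (x : ℕ) < n) :
    ((hfun n σ x : Fin (2 * n)) : ℕ) < n := by
  rw [hfun, dif_pos hx]
  obtain ⟨i, hi, hival⟩ := (memWf_iff n σ).mp (isoW n σ ⟨(x : ℕ), hx⟩).2
  rw [← hival]
  simp only [Equiv.Perm.inv_def, Equiv.symm_apply_apply]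
  exact hi

lemma hfun_inj : Function.Injective (hfun n σ) := by
  intro x y h
  by_cases hx : (x : ℕ) < n
  · by_cases hy : (y : ℕ) < n
    · rw [hfun, dif_pos hx, hfun, dif_pos hy] at h
      have h1 := (gperm n σ)⁻¹.injective (σ⁻¹.injective h)
      have h2 : (isoW n σ ⟨(x : ℕ), hx⟩) = (isoW n σ ⟨(y : ℕ), hy⟩) := Subtype.ext h1
      have h3 := (isoW n σ).injective h2
      have h4 := congrArg (fun z : Fin n => (z : ℕ)) h3
      exact Fin.ext h4
    · have := hfun_small n σ hx
      rw [h, hfun, dif_neg hy] at this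
      omega
  · by_cases hy : (y : ℕ) < n
    · have := hfun_small n σ hy
      rw [← h, hfun, dif_neg hx] at this
      omega
    · rw [hfun, dif_neg hx, hfun, dif_neg hy] at h
      exact h

def hperm : Equiv.Perm (Fin (2 * n)) :=
  Equiv.ofBijective (hfun n σ) (Finite.injective_iff_bijective.mp (hfun_inj n σ))

def tmin : Equiv.Perm (Fin (2 * n)) := gperm n σ * σ * hperm n σ

lemma tmin_small {x : Fin (2 * n)} (hx : (x : ℕ) < n) :
    tmin n σ x = (isoW n σ ⟨(x : ℕ), hx⟩ : Fin (2 * n)) := by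
  show gperm n σ (σ (hperm n σ x)) = _
  have : hperm n σ x = σ⁻¹ ((gperm n σ)⁻¹ ((isoW n σ ⟨(x : ℕ), hx⟩ : Fin (2 * n)))) := by
    show hfun n σ x = _
    rw [hfun, dif_pos hx]
  rw [this]
  simp

lemma tmin_large {x : Fin (2 * n)} (hx : ¬ (x : ℕ) < n) :
    tmin n σ x = gfun n σ (σ x) := by
  show gperm n σ (σ (hperm n σ x)) = _
  have : hperm n σ x = x := by
    show hfun n σ x = x
    rw [hfun, dif_neg hx]
  rw [this, gperm_apply]

lemma tmin_mono {x y : Fin (2 * n)} (hy : (y : ℕ) < n) (hxy : x < y) :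
    tmin n σ x < tmin n σ y := by
  have hx : (x : ℕ) < n := lt_trans hxy hy
  rw [tmin_small n σ hx, tmin_small n σ hy]
  have h1 : (⟨(x : ℕ), hx⟩ : Fin n) < ⟨(y : ℕ), hy⟩ := hxy
  have h2 := (isoW n σ).strictMono h1
  exact Subtype.coe_lt_coe.mpr h2

lemma tmin_small_val_lt {x : Fin (2 * n)} (hx : (x : ℕ) < n)
    (h2 : ((tmin n σ x : Fin (2 * n)) : ℕ) < n) :
    ((tmin n σ x : Fin (2 * n)) : ℕ) < (A1 n σ).card := by
  rw [tmin_small n σ hx] at h2 ⊢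
  obtain ⟨i, hi, hival⟩ := (memWf_iff n σ).mp (isoW n σ ⟨(x : ℕ), hx⟩).2
  rw [← hival] at h2 ⊢
  rw [gperm_apply] at h2 ⊢
  by_cases hs : ((σ i : Fin (2 * n)) : ℕ) < n
  · have hs1 : ((σ⁻¹ (σ i) : Fin (2 * n)) : ℕ) < n := by
      simpa using hi
    rw [gfun_eq1 n σ hs hs1]
    exact (((isoA1 n σ)).symm ⟨σ i, memA1 n σ hs hs1⟩).isLt
  · rw [gfun_large n σ hs] at h2
    omega

lemma tmin_N3 {j : Fin (2 * n)} (hj : ¬ (j : ℕ) < n)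
    (hs : ((σ j : Fin (2 * n)) : ℕ) < n) :
    ∃ hm : j ∈ B3 n σ, ((tmin n σ j : Fin (2 * n)) : ℕ) =
      (A1 n σ).card + (((isoB3 n σ).symm ⟨j, hm⟩ : Fin (B3 n σ).card) : ℕ) := by
  have hm : j ∈ B3 n σ := by
    simp only [B3, Finset.mem_filter, Finset.mem_univ, true_and]
    exact ⟨le_of_not_gt hj, hs⟩
  refine ⟨hm, ?_⟩
  rw [tmin_large n σ hj]
  have hs1 : ¬ ((σ⁻¹ (σ j) : Fin (2 * n)) : ℕ) < n := by
    simp only [Equiv.Perm.inv_def, Equiv.symm_apply_apply]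
    exact hj
  rw [gfun_eq2 n σ hs hs1]
  have harg : (⟨σ⁻¹ (σ j), memB3 n σ hs hs1⟩ : {x // x ∈ B3 n σ}) = ⟨j, hm⟩ :=
    Subtype.ext (by simp)
  rw [Fin.val_mk, harg]

lemma tmin_N4 {j : Fin (2 * n)} (hj : ¬ (j : ℕ) < n)
    (hs : ¬ ((σ j : Fin (2 * n)) : ℕ) < n) : tmin n σ j = σ j := by
  rw [tmin_large n σ hj, gfun_large n σ hs]




lemma gperm_mem : gperm n σ ∈ Sfix n :=
  fun i hi => gfun_large n σ (not_lt.mpr hi)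

lemma hperm_mem : hperm n σ ∈ Sfix n := by
  intro i hi
  show hfun n σ i = i
  rw [hfun, dif_neg (not_lt.mpr hi)]

lemma tmin_mem : tmin n σ ∈ dcoset n σ :=
  ⟨gperm n σ, gperm_mem n σ, hperm n σ, hperm_mem n σ, rfl⟩

lemma tmin_sigma_small {j : Fin (2 * n)} (hj : ¬ (j : ℕ) < n)
    (h2 : ((tmin n σ j : Fin (2 * n)) : ℕ) < n) : ((σ j : Fin (2 * n)) : ℕ) < n := by
  by_contra hc
  rw [tmin_N4 n σ hj hc] at h2
  omega

lemma mzero_firsthalf {l : ℕ} (hl : l = 1 ∨ l = 2) : mcount n (tmin n σ) l 1 = 0 := by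
  rw [mcount, Set.ncard_eq_zero (Set.toFinite _), Set.eq_empty_iff_forall_notMem]
  rintro ⟨i, j⟩ ⟨h1, h2, h3, h4⟩
  dsimp only at h1 h2 h3 h4
  simp only [inN] at h2
  have := tmin_mono n σ h2.1 h3
  exact lt_asymm this h4

lemma mzero22 : mcount n (tmin n σ) 2 2 = 0 := by
  rw [mcount, Set.ncard_eq_zero (Set.toFinite _), Set.eq_empty_iff_forall_notMem]
  rintro ⟨i, j⟩ ⟨h1, h2, h3, h4⟩
  dsimp only at h1 h2 h3 h4
  simp only [inN] at h2
  have := tmin_mono n σ h2.1 h3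
  exact lt_asymm this h4

lemma mzero13 : mcount n (tmin n σ) 1 3 = 0 := by
  rw [mcount, Set.ncard_eq_zero (Set.toFinite _), Set.eq_empty_iff_forall_notMem]
  rintro ⟨i, j⟩ ⟨h1, h2, h3, h4⟩
  dsimp only at h1 h2 h3 h4
  simp only [inN] at h1 h2
  have hj : ¬ (j : ℕ) < n := not_lt.mpr h2.1
  have hσj := tmin_sigma_small n σ hj h2.2
  obtain ⟨hm, heq⟩ := tmin_N3 n σ hj hσj
  have hlt := tmin_small_val_lt n σ h1.1 h1.2
  have h4' := Fin.lt_def.mp h4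
  omega

lemma mzero33 : mcount n (tmin n σ) 3 3 = 0 := by
  rw [mcount, Set.ncard_eq_zero (Set.toFinite _), Set.eq_empty_iff_forall_notMem]
  rintro ⟨i, j⟩ ⟨h1, h2, h3, h4⟩
  dsimp only at h1 h2 h3 h4
  simp only [inN] at h1 h2
  have hi : ¬ (i : ℕ) < n := not_lt.mpr h1.1
  have hj : ¬ (j : ℕ) < n := not_lt.mpr h2.1
  obtain ⟨hmi, heqi⟩ := tmin_N3 n σ hi (tmin_sigma_small n σ hi h1.2)
  obtain ⟨hmj, heqj⟩ := tmin_N3 n σ hj (tmin_sigma_small n σ hj h2.2)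
  have hmono : (isoB3 n σ).symm ⟨i, hmi⟩ < (isoB3 n σ).symm ⟨j, hmj⟩ :=
    (isoB3 n σ).symm.strictMono (Subtype.mk_lt_mk.mpr h3)
  have hmono' := Fin.lt_def.mp hmono
  have h4' := Fin.lt_def.mp h4
  omega

end Construction


/-- An element `w ∈ O_σ` is the minimal-length element of `O_σ` if and only if
`m_{11}^w = m_{13}^w = m_{21}^w = m_{22}^w = m_{33}^w = 0`. -/
theorem minimal_iff_mcounts_vanish (n : ℕ) (hn : 1 ≤ n) (σ w : Equiv.Perm (Fin (2 * n)))
    (hw : w ∈ dcoset n σ) :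
    (∀ t ∈ dcoset n σ, len n w ≤ len n t) ↔
      (mcount n w 1 1 = 0 ∧ mcount n w 1 3 = 0 ∧ mcount n w 2 1 = 0 ∧
        mcount n w 2 2 = 0 ∧ mcount n w 3 3 = 0) := by
  have hPw := P_of_mem hw
  have htm := tmin_mem n σ
  have hPt0 := P_of_mem htm
  have hlen_t0 : len n (tmin n σ) = (Uset n (tmin n σ)).ncard := by
    rw [len_decomp, mzero_firsthalf n σ (Or.inl rfl), mzero13,
      mzero_firsthalf n σ (Or.inr rfl), mzero22, mzero33]
    omega
  have hU : (Uset n w).ncard = (Uset n (tmin n σ)).ncard := Uset_ncard_congr hPw hPt0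
  constructor
  · intro hmin
    have h1 := hmin _ htm
    rw [hlen_t0, ← hU, len_decomp] at h1
    omega
  · rintro ⟨e1, e2, e3, e4, e5⟩ t ht
    have hPt := P_of_mem ht
    have h1 : len n w = (Uset n w).ncard := by
      rw [len_decomp, e1, e2, e3, e4, e5]
      omega
    rw [h1, Uset_ncard_congr hPw hPt, len_decomp n t]
    omega
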